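/- For all integers l ≥ 1 and all integers μ with 1 ≤ μ ≤ n − l, if X_{n,μ} is a binomial random variable with n trials and success probability μ/n, then 1/2 ≥ P(X_{n,μ} ≥ μ + l) ≥ (μ/(μ+l))^{μ+l} ≥ 1/(1+l)^{1+l}. Moreover (μ/(μ+l))^{μ+l} = P(X_{μ+l,μ} = μ+l) and 1/(1+l)^{1+l} = P(X_{1+l,1} = 1+l), so both lower bounds are attained within the family. -/

import Mathlib

/-- The probability that a binomial random variable with `n` trials and success
probability `p` takes the value `k`. -/
noncomputable def binomialPMF (n : ℕ) (p : ℝ) (k : ℕ) : ℝ :=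
  (n.choose k : ℝ) * p ^ k * (1 - p) ^ (n - k)

/-- `P(X ≥ t)` for `X` binomial with `n` trials and success probability `p`,
where `t` is a real threshold. -/
noncomputable def binomialTail (n : ℕ) (p : ℝ) (t : ℝ) : ℝ :=
  ∑ k ∈ Finset.range (n + 1), if t ≤ (k : ℝ) then binomialPMF n p k else 0

noncomputable def tailN (n : ℕ) (p : ℝ) (s : ℕ) : ℝ :=
  ∑ k ∈ Finset.Icc s n, binomialPMF n p k

noncomputable def uAux (n : ℕ) (q : ℝ) (j : ℕ) : ℝ :=
  (j : ℝ) * (n.choose j : ℝ) * q ^ (j - 1) * (1 - q) ^ (n - j)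

lemma pmf_nonneg (n k : ℕ) {p : ℝ} (h0 : 0 ≤ p) (h1 : p ≤ 1) : 0 ≤ binomialPMF n p k := by
  have : (0:ℝ) ≤ 1 - p := by linarith
  unfold binomialPMF; positivity

lemma sum_pmf (n : ℕ) (p : ℝ) : ∑ k ∈ Finset.range (n + 1), binomialPMF n p k = 1 := by
  have h := add_pow p (1 - p) n
  have : p + (1 - p) = 1 := by ring
  rw [this, one_pow] at h
  rw [h]; apply Finset.sum_congr rfl; intro k _; unfold binomialPMF; ring

lemma binomialTail_eq (n : ℕ) (p : ℝ) (s : ℕ) (h : s ≤ n) :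
    binomialTail n p (s : ℝ) = tailN n p s := by
  unfold binomialTail tailN
  rw [← Finset.sum_filter]
  congr 1
  ext k
  simp only [Finset.mem_filter, Finset.mem_range, Finset.mem_Icc, Nat.lt_succ_iff, Nat.cast_le]
  omega

lemma tailN_nonneg (n s : ℕ) {p : ℝ} (h0 : 0 ≤ p) (h1 : p ≤ 1) : 0 ≤ tailN n p s :=
  Finset.sum_nonneg fun k _ => pmf_nonneg n k h0 h1

lemma tailN_le_one (n s : ℕ) {p : ℝ} (h0 : 0 ≤ p) (h1 : p ≤ 1) : tailN n p s ≤ 1 := by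
  rw [← sum_pmf n p]
  apply Finset.sum_le_sum_of_subset_of_nonneg
  · intro k hk; simp only [Finset.mem_Icc] at hk; simp [Nat.lt_succ_iff, hk.2]
  · intro k _ _; exact pmf_nonneg n k h0 h1

lemma tailN_mono_s (n : ℕ) {s s' : ℕ} (hss : s ≤ s') {p : ℝ} (h0 : 0 ≤ p) (h1 : p ≤ 1) :
    tailN n p s' ≤ tailN n p s := by
  apply Finset.sum_le_sum_of_subset_of_nonneg
  · intro k hk; simp only [Finset.mem_Icc] at *; omega
  · intro k _ _; exact pmf_nonneg n k h0 h1

lemma tailN_zero (n s : ℕ) (hs : 1 ≤ s) : tailN n 0 s = 0 := by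
  apply Finset.sum_eq_zero
  intro k hk
  simp only [Finset.mem_Icc] at hk
  unfold binomialPMF
  rw [zero_pow (by omega)]
  ring

lemma hasDerivAt_term (n k : ℕ) (q : ℝ) :
    HasDerivAt (fun x : ℝ => binomialPMF n x k) (uAux n q k - uAux n q (k + 1)) q := by
  have h1 : HasDerivAt (fun x : ℝ => x ^ k) ((k : ℝ) * q ^ (k - 1)) q := hasDerivAt_pow k q
  have hsub : HasDerivAt (fun x : ℝ => 1 - x) (-1 : ℝ) q := by
    simpa using (hasDerivAt_const q (1:ℝ)).fun_sub (hasDerivAt_id q)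
  have h2 : HasDerivAt (fun x : ℝ => (1 - x) ^ (n - k))
      (-(((n - k : ℕ) : ℝ) * (1 - q) ^ (n - k - 1))) q := by
    have := (hasDerivAt_pow (n - k) (1 - q)).comp q hsub
    simpa [mul_comm, mul_left_comm, Function.comp_def] using this
  have h3 := (h1.fun_mul h2).const_mul ((n.choose k : ℝ))
  have hfun : (fun x : ℝ => (n.choose k : ℝ) * (x ^ k * (1 - x) ^ (n - k)))
      = fun x : ℝ => binomialPMF n x k := by
    funext x; unfold binomialPMF; ring
  rw [hfun] at h3
  refine h3.congr_deriv (Eq.symm ?_)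
  have hc : ((n.choose (k+1) * (k+1) : ℕ) : ℝ) = ((n.choose k * (n - k) : ℕ) : ℝ) := by
    rw [Nat.choose_succ_right_eq]
  unfold uAux
  have hnk : n - (k + 1) = n - k - 1 := by omega
  rw [hnk]
  push_cast [-Nat.cast_sub] at hc ⊢
  linear_combination (-(q ^ k * (1 - q) ^ (n - k - 1))) * hc

lemma uAux_top (n : ℕ) (q : ℝ) : uAux n q (n + 1) = 0 := by
  unfold uAux
  rw [Nat.choose_eq_zero_of_lt (by omega)]
  simp

lemma hasDerivAt_tailN (n s : ℕ) (q : ℝ) :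
    HasDerivAt (fun x : ℝ => tailN n x s) (uAux n q s) q := by
  rcases le_or_gt s n with hsn | hsn
  · have h := HasDerivAt.fun_sum (u := Finset.Icc s n)
      (A := fun k x => binomialPMF n x k) (A' := fun k => uAux n q k - uAux n q (k+1))
      (fun k _ => hasDerivAt_term n k q)
    have hsum : ∑ k ∈ Finset.Icc s n, (uAux n q k - uAux n q (k+1)) = uAux n q s := by
      rw [← Finset.Ico_add_one_right_eq_Icc, Finset.sum_Ico_eq_sum_range]
      have : ∀ i, s + i + 1 = s + (i + 1) := by omega
      calc ∑ i ∈ Finset.range (n + 1 - s), (uAux n q (s + i) - uAux n q (s + i + 1))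
          = ∑ i ∈ Finset.range (n + 1 - s),
              ((fun j => uAux n q (s + j)) i - (fun j => uAux n q (s + j)) (i+1)) := by
            apply Finset.sum_congr rfl; intro i _; rw [this]
        _ = uAux n q (s + 0) - uAux n q (s + (n + 1 - s)) := Finset.sum_range_sub' _ _
        _ = uAux n q s := by
            rw [show s + (n + 1 - s) = n + 1 by omega, uAux_top]; simp
    rw [hsum] at h
    exact h
  · have h1 : (fun x : ℝ => tailN n x s) = fun _ => (0:ℝ) := by
      funext x; unfold tailN; rw [Finset.Icc_eq_empty (by omega)]; simp
    have h2 : uAux n q s = 0 := by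
      unfold uAux; rw [Nat.choose_eq_zero_of_lt hsn]; simp
    rw [h1, h2]
    exact hasDerivAt_const q 0

lemma pmf_pascal (n j : ℕ) (q : ℝ) :
    binomialPMF (n+1) q (j+1)
      = q * binomialPMF n q j + (1 - q) * binomialPMF n q (j+1) := by
  unfold binomialPMF
  rcases lt_or_ge j n with hj | hj
  · have h1 : n + 1 - (j + 1) = n - j := by omega
    have h2 : n - j = (n - (j+1)) + 1 := by omega
    rw [Nat.choose_succ_succ, h1, h2]
    push_cast
    ring
  · rcases eq_or_lt_of_le hj with rfl | hj'
    · rw [Nat.choose_succ_succ]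
      simp [Nat.choose_eq_zero_of_lt (Nat.lt_succ_self _)]
      ring
    · rw [Nat.choose_eq_zero_of_lt (show n + 1 < j + 1 by omega),
        Nat.choose_eq_zero_of_lt (show n < j by omega),
        Nat.choose_eq_zero_of_lt (show n < j + 1 by omega)]
      simp

lemma tailN_pascal (n s : ℕ) (hs : 1 ≤ s) (hsn : s ≤ n + 1) (q : ℝ) :
    tailN (n+1) q s = q * tailN n q (s-1) + (1 - q) * tailN n q s := by
  obtain ⟨t, rfl⟩ : ∃ t, s = t + 1 := ⟨s - 1, by omega⟩
  have hres : (t + 1) - 1 = t := by omega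
  rw [hres]
  unfold tailN
  have hre : Finset.Icc (t+1) (n+1) = (Finset.Icc t n).image (· + 1) := by
    ext k; simp only [Finset.mem_Icc, Finset.mem_image]
    constructor
    · intro h; exact ⟨k - 1, by omega, by omega⟩
    · rintro ⟨a, ha, rfl⟩; omega
  have hinj : ∀ x ∈ Finset.Icc t n, ∀ y ∈ Finset.Icc t n, x + 1 = y + 1 → x = y := by
    intro x _ y _ h; omega
  rw [hre, Finset.sum_image hinj]
  have : ∀ j ∈ Finset.Icc t n, binomialPMF (n+1) q (j+1)
      = q * binomialPMF n q j + (1 - q) * binomialPMF n q (j+1) :=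
    fun j _ => pmf_pascal n j q
  rw [Finset.sum_congr rfl this, Finset.sum_add_distrib, ← Finset.mul_sum, ← Finset.mul_sum]
  congr 1
  have h3 : ∑ i ∈ Finset.Icc t n, binomialPMF n q (i+1)
      = ∑ k ∈ (Finset.Icc t n).image (· + 1), binomialPMF n q k :=
    (Finset.sum_image hinj).symm
  rw [h3, ← hre]
  have h2 : Finset.Icc (t+1) (n+1) = insert (n+1) (Finset.Icc (t+1) n) :=
    (Finset.insert_Icc_right_eq_Icc_add_one (by omega)).symm
  rw [h2, Finset.sum_insert (by simp), show binomialPMF n q (n+1) = 0 by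
    unfold binomialPMF; rw [Nat.choose_eq_zero_of_lt (by omega)]; simp]
  ring

lemma tailN_diff (n s : ℕ) (hs : 1 ≤ s) (hsn : s ≤ n) (q : ℝ) :
    tailN n q (s-1) = binomialPMF n q (s-1) + tailN n q s := by
  unfold tailN
  have h : Finset.Icc (s-1) n = insert (s-1) (Finset.Icc s n) := by
    rw [show Finset.Icc s n = Finset.Icc ((s-1)+1) n by congr 1; omega,
      Finset.insert_Icc_add_one_left_eq_Icc (by omega)]
  rw [h, Finset.sum_insert (by simp only [Finset.mem_Icc]; omega)]

/-- the interpolation step: tail increases from `n` to `n+1`. -/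
lemma tailN_step (μ s n : ℕ) (hμ : 1 ≤ μ) (hμs : μ + 1 ≤ s) (hsn : s ≤ n) :
    tailN n ((μ : ℝ) / n) s ≤ tailN (n+1) ((μ : ℝ) / (n+1)) s := by
  obtain ⟨t, rfl⟩ : ∃ t, s = t + 2 := ⟨s - 2, by omega⟩
  have hn0 : (0:ℝ) < n := by
    have : 0 < n := by omega
    exact_mod_cast this
  have hn1 : (0:ℝ) < (n:ℝ) + 1 := by linarith
  set g : ℝ → ℝ := fun q =>
    ((μ : ℝ) - n * q) * tailN n q (t+1) + (1 - μ + n * q) * tailN n q (t+2) with hg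
  -- derivative of g
  set G : ℝ → ℝ := fun q =>
    (-(n:ℝ)) * tailN n q (t+1) + ((μ : ℝ) - n * q) * uAux n q (t+1)
    + ((n:ℝ)) * tailN n q (t+2) + (1 - μ + n * q) * uAux n q (t+2) with hG
  have hderiv : ∀ q : ℝ, HasDerivAt g (G q) q := by
    intro q
    have h1 : HasDerivAt (fun q : ℝ => (μ : ℝ) - n * q) (-(n:ℝ)) q := by
      simpa using ((hasDerivAt_id q).const_mul (n:ℝ)).const_sub (μ:ℝ)
    have h2 : HasDerivAt (fun q : ℝ => 1 - (μ:ℝ) + n * q) ((n:ℝ)) q := by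
      simpa using ((hasDerivAt_id q).const_mul (n:ℝ)).const_add (1 - (μ:ℝ))
    have h3 := h1.fun_mul (hasDerivAt_tailN n (t+1) q)
    have h4 := h2.fun_mul (hasDerivAt_tailN n (t+2) q)
    have := h3.fun_add h4
    refine this.congr_deriv ?_
    ring
  -- sign of G on the open interval
  have hGsign : ∀ q ∈ Set.Ioo ((μ:ℝ)/(n+1)) ((μ:ℝ)/n), G q ≤ 0 := by
    rintro q ⟨hq1, hq2⟩
    have hq0 : 0 < q := lt_of_le_of_lt (by positivity) hq1
    have hμn : (μ:ℝ) ≤ (n:ℝ) - 1 := by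
      have : μ + 1 ≤ n := by omega
      have := (Nat.cast_le (α := ℝ)).2 this
      push_cast at this; linarith
    have hq3 : q < 1 := lt_of_lt_of_le hq2 (by rw [div_le_one hn0]; linarith)
    have h1q : 0 < 1 - q := by linarith
    -- rewrite G q in factored form
    have hTd : tailN n q (t+1) = binomialPMF n q (t+1) + tailN n q (t+2) := by
      have := tailN_diff n (t+2) (by omega) (by omega) q
      simpa using this
    have hchoose : ((n.choose (t+2) * (t+2) : ℕ) : ℝ) = ((n.choose (t+1) * (n - (t+1)) : ℕ) : ℝ) := by
      rw [Nat.choose_succ_right_eq]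
    have hcast : ((n - (t+1) : ℕ) : ℝ) = (n:ℝ) - (t:ℝ) - 1 := by
      have h : t + 1 ≤ n := by omega
      rw [Nat.cast_sub h]; push_cast; ring
    push_cast [-Nat.cast_sub] at hchoose
    rw [hcast] at hchoose
    have hfact : G q = (n.choose (t+1) : ℝ) * q ^ t * (1-q) ^ (n - (t+2))
        * ((((n:ℝ)+1) * q - μ) * ((n:ℝ) * q - ((t:ℝ)+1))) := by
      rw [hG]
      simp only [hTd]
      unfold binomialPMF uAux
      have e1 : n - (t+1) = (n - (t+2)) + 1 := by omega
      have e2 : (t+1) - 1 = t := by omega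
      have e3 : (t+2) - 1 = t + 1 := by omega
      rw [e1, e2, e3]
      have e4 : q ^ (t+1) = q ^ t * q := by ring
      have e5 : (1-q) ^ ((n - (t+2)) + 1) = (1-q) ^ (n - (t+2)) * (1-q) := by ring
      rw [e4, e5]
      push_cast
      linear_combination (q ^ t * q * ((n:ℝ) * q - (μ:ℝ) + 1) * (1-q) ^ (n - (t+2))) * hchoose
    rw [hfact]
    have hA : (0:ℝ) ≤ (n.choose (t+1) : ℝ) * q ^ t * (1-q) ^ (n - (t+2)) := by positivity
    have hB : ((((n:ℝ)+1) * q - μ) * ((n:ℝ) * q - ((t:ℝ)+1))) ≤ 0 := by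
      apply mul_nonpos_of_nonneg_of_nonpos
      · have := (div_le_iff₀ hn1).1 (le_of_lt hq1)
        linarith
      · have := (le_div_iff₀ hn0).1 (le_of_lt hq2)
        have hμt : (μ:ℝ) ≤ (t:ℝ) + 1 := by
          have : μ ≤ t + 1 := by omega
          exact_mod_cast this
        linarith
    exact mul_nonpos_of_nonneg_of_nonpos hA hB
  -- antitone on the closed interval
  have hle : (μ:ℝ)/(n+1) ≤ (μ:ℝ)/n := by
    apply div_le_div_of_nonneg_left (by positivity) hn0
    linarith
  have hanti : AntitoneOn g (Set.Icc ((μ:ℝ)/(n+1)) ((μ:ℝ)/n)) := by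
    apply antitoneOn_of_hasDerivWithinAt_nonpos (convex_Icc _ _)
      (fun q _ => (hderiv q).continuousAt.continuousWithinAt)
      (f' := G)
    · intro x hx
      exact (hderiv x).hasDerivWithinAt
    · intro x hx
      rw [interior_Icc] at hx
      exact hGsign x hx
  have hends := hanti (Set.left_mem_Icc.2 hle) (Set.right_mem_Icc.2 hle) hle
  -- identify endpoints
  have hgn : g ((μ:ℝ)/n) = tailN n ((μ:ℝ)/n) (t+2) := by
    simp only [hg]
    have : (μ:ℝ) - n * ((μ:ℝ)/n) = 0 := by field_simp; ring
    rw [this]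
    have : 1 - (μ:ℝ) + n * ((μ:ℝ)/n) = 1 := by field_simp; ring
    rw [this]
    ring
  have hgn1 : g ((μ:ℝ)/(n+1)) = tailN (n+1) ((μ:ℝ)/(n+1)) (t+2) := by
    simp only [hg]
    have hpas := tailN_pascal n (t+2) (by omega) (by omega) ((μ:ℝ)/(n+1))
    have e1 : (μ:ℝ) - n * ((μ:ℝ)/(n+1)) = (μ:ℝ)/(n+1) := by field_simp; ring
    have e2 : 1 - (μ:ℝ) + n * ((μ:ℝ)/(n+1)) = 1 - (μ:ℝ)/(n+1) := by field_simp; ring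
    rw [e1, e2, hpas]
    norm_num
  rw [hgn, hgn1] at hends
  exact hends

lemma pmf_self (n : ℕ) (p : ℝ) : binomialPMF n p n = p ^ n := by
  simp [binomialPMF]

lemma part2 (μ l n : ℕ) (hμ : 1 ≤ μ) (hl : 1 ≤ l) (hn : μ + l ≤ n) :
    ((μ : ℝ) / ((μ : ℝ) + l)) ^ (μ + l) ≤ tailN n ((μ : ℝ) / n) (μ + l) := by
  induction n, hn using Nat.le_induction with
  | base =>
      unfold tailN
      rw [Finset.Icc_self, Finset.sum_singleton, pmf_self]
      push_cast
      exact le_refl _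
  | succ n hn ih =>
      refine le_trans ih ?_
      push_cast
      exact_mod_cast tailN_step μ (μ + l) n hμ (by omega) hn

lemma part3_step (l μ : ℕ) (hμ : 1 ≤ μ) :
    ((μ : ℝ) / ((μ : ℝ) + l)) ^ (μ + l)
      ≤ (((μ:ℝ)+1) / (((μ:ℝ)+1) + l)) ^ ((μ+1) + l) := by
  set x : ℝ := (μ : ℝ) with hx
  set c : ℝ := (l : ℝ) with hc
  have hx1 : (1:ℝ) ≤ x := by rw [hx]; exact_mod_cast hμ
  have hc0 : (0:ℝ) ≤ c := by positivity
  have hx0 : (0:ℝ) < x := by linarith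
  have hxc : (0:ℝ) < x + c := by linarith
  have hxc1 : (0:ℝ) < x + c + 1 := by linarith
  set a0 : ℝ := c / (x * (x + c + 1)) with ha0
  have ha0nn : 0 ≤ a0 := by positivity
  have hkey : 1 ≤ (1 + (x + c) * a0) * ((x + 1) / (x + c + 1)) := by
    rw [ha0, ← sub_nonneg]
    have : (1 + (x + c) * (c / (x * (x + c + 1)))) * ((x + 1) / (x + c + 1)) - 1
        = c ^ 2 / (x * (x + c + 1) ^ 2) := by
      field_simp
      ring
    rw [this]
    positivity
  have hb : 1 + ((μ + l : ℕ) : ℝ) * a0 ≤ (1 + a0) ^ (μ + l) :=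
    one_add_mul_le_pow (by linarith) (μ + l)
  have hcast : ((μ + l : ℕ) : ℝ) = x + c := by push_cast; rw [hx, hc]
  rw [hcast] at hb
  have h1 : ((x + 1) / (x + c + 1)) = (x / (x + c)) * (1 + a0) := by
    rw [ha0]; field_simp; ring
  have hgoal : (((μ:ℝ)+1) / (((μ:ℝ)+1) + c)) ^ ((μ+1) + l)
      = ((x / (x + c)) * (1 + a0)) ^ (μ + l) * ((x + 1) / (x + c + 1)) := by
    rw [← h1]
    rw [show (μ+1) + l = (μ + l) + 1 by omega, pow_succ]
    congr 2 <;> · push_cast; rw [hx]; ring_nf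
  rw [hgoal, mul_pow]
  have hpos : (0:ℝ) ≤ (x / (x + c)) ^ (μ + l) := by positivity
  calc (x / (x + c)) ^ (μ + l)
      = (x / (x + c)) ^ (μ + l) * 1 := by ring
    _ ≤ (x / (x + c)) ^ (μ + l) * ((1 + (x + c) * a0) * ((x + 1) / (x + c + 1))) := by
        apply mul_le_mul_of_nonneg_left hkey hpos
    _ ≤ (x / (x + c)) ^ (μ + l) * ((1 + a0) ^ (μ + l) * ((x + 1) / (x + c + 1))) := by
        apply mul_le_mul_of_nonneg_left _ hpos
        apply mul_le_mul_of_nonneg_right hb (by positivity)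
    _ = (x / (x + c)) ^ (μ + l) * (1 + a0) ^ (μ + l) * ((x + 1) / (x + c + 1)) := by ring

lemma part3 (l μ : ℕ) (hl : 1 ≤ l) (hμ : 1 ≤ μ) :
    1 / ((1 : ℝ) + l) ^ (1 + l) ≤ ((μ : ℝ) / ((μ : ℝ) + l)) ^ (μ + l) := by
  induction μ, hμ using Nat.le_induction with
  | base =>
      apply le_of_eq
      rw [div_pow]
      norm_num
  | succ μ hμ ih =>
      refine le_trans ih ?_
      have := part3_step l μ hμ
      refine le_trans this (le_of_eq ?_)
      push_cast
      norm_num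

/-- core pairing inequality, `b ≤ a`, `n = a + b`. -/
lemma pairing_core (a b : ℕ) (hb : 1 ≤ b) (hba : b ≤ a) :
    ∀ j, j + 1 ≤ b → ((a+b).choose (a+1+j) : ℝ) * (a:ℝ) ^ (2*j+1)
      ≤ ((a+b).choose (a-j) : ℝ) * (b:ℝ) ^ (2*j+1) := by
  set n := a + b with hn
  intro j
  induction j with
  | zero =>
      intro _
      have h := Nat.choose_succ_right_eq n a
      have hcast : ((n.choose (a+1)):ℝ) * ((a:ℝ)+1) = ((n.choose a):ℝ) * (b:ℝ) := by
        have h2 : n - a = b := by omega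
        rw [h2] at h
        exact_mod_cast congrArg (Nat.cast (R := ℝ)) h
      have hc0 : (0:ℝ) ≤ ((n.choose (a+1)):ℝ) := by positivity
      have hgoal : ((n.choose (a+1)):ℝ) * (a:ℝ) ≤ ((n.choose a):ℝ) * (b:ℝ) := by nlinarith
      simpa using hgoal
  | succ j ih =>
      intro hj1
      have hj : j + 1 ≤ b := by omega
      have ih' := ih hj
      -- identities
      have hAB : a + 1 + j + 1 ≤ n := by omega
      have hid1 : ((n.choose (a+1+(j+1))):ℝ) * ((a:ℝ)+(j:ℝ)+2)
          = ((b:ℝ)-(j:ℝ)-1) * ((n.choose (a+1+j)):ℝ) := by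
        have h := Nat.choose_succ_right_eq n (a+1+j)
        have h2 : n - (a+1+j) = b - 1 - j := by omega
        rw [h2] at h
        have hcsub : ((b - 1 - j : ℕ):ℝ) = (b:ℝ) - 1 - (j:ℝ) := by
          have e : b - 1 - j = b - (j+1) := by omega
          rw [e, Nat.cast_sub (by omega)]
          push_cast; ring
        have hcc := congrArg (Nat.cast (R := ℝ)) h
        rw [Nat.cast_mul, Nat.cast_mul, hcsub] at hcc
        have e : a+1+(j+1) = a+1+j+1 := by omega
        rw [e]
        push_cast at hcc ⊢
        linarith
      have hid2 : ((n.choose (a-j)):ℝ) * ((a:ℝ)-(j:ℝ))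
          = ((b:ℝ)+(j:ℝ)+1) * ((n.choose (a-(j+1))):ℝ) := by
        have h := Nat.choose_succ_right_eq n (a-(j+1))
        have h2 : n - (a-(j+1)) = b + j + 1 := by omega
        have h3 : a - (j+1) + 1 = a - j := by omega
        rw [h2, h3] at h
        have hcsub : ((a - j : ℕ):ℝ) = (a:ℝ) - (j:ℝ) := by
          rw [Nat.cast_sub (by omega)]
        have hcc := congrArg (Nat.cast (R := ℝ)) h
        rw [Nat.cast_mul, Nat.cast_mul, hcsub] at hcc
        push_cast at hcc ⊢
        linarith
      -- scalar inequality pair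
      have hA : (0:ℝ) < (a:ℝ) := by exact_mod_cast Nat.lt_of_lt_of_le (by omega) hba
      have hB : (0:ℝ) < (b:ℝ) := by exact_mod_cast hb
      have hJB : (j:ℝ) + 2 ≤ (b:ℝ) := by exact_mod_cast hj1
      have hBA : (b:ℝ) ≤ (a:ℝ) := by exact_mod_cast hba
      have hscal : ((b:ℝ)-(j:ℝ)-1) * ((b:ℝ)+(j:ℝ)+1) * (a:ℝ)^2
          ≤ ((a:ℝ)-(j:ℝ)) * ((a:ℝ)+(j:ℝ)+2) * (b:ℝ)^2 := by
        have key1 : (0:ℝ) ≤ ((j:ℝ)+1)^2 * (((a:ℝ))^2 - ((b:ℝ))^2) := by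
          apply mul_nonneg (sq_nonneg _)
          nlinarith
        nlinarith [key1]
      -- combine: multiply ih' by hscal
      have hpos1 : (0:ℝ) ≤ ((n.choose (a+1+j)):ℝ) * (a:ℝ)^(2*j+1) := by positivity
      have hpos2 : (0:ℝ) ≤ ((b:ℝ)-(j:ℝ)-1) * ((b:ℝ)+(j:ℝ)+1) * (a:ℝ)^2 := by
        have : (0:ℝ) ≤ (b:ℝ)-(j:ℝ)-1 := by linarith
        have : (0:ℝ) ≤ (b:ℝ)+(j:ℝ)+1 := by linarith
        positivity
      have hmul := mul_le_mul ih' hscal hpos2 (by positivity)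
      -- rewrite both sides
      have e1 : ((n.choose (a+1+j)):ℝ) * (a:ℝ)^(2*j+1) * (((b:ℝ)-(j:ℝ)-1) * ((b:ℝ)+(j:ℝ)+1) * (a:ℝ)^2)
          = (((n.choose (a+1+(j+1))):ℝ) * (a:ℝ)^(2*(j+1)+1)) * (((a:ℝ)+(j:ℝ)+2) * ((b:ℝ)+(j:ℝ)+1)) := by
        rw [show 2*(j+1)+1 = (2*j+1)+2 by omega, pow_add]
        linear_combination (-((a:ℝ)^(2*j+1) * (a:ℝ)^2 * ((b:ℝ)+(j:ℝ)+1))) * hid1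
      have e2 : ((n.choose (a-j)):ℝ) * (b:ℝ)^(2*j+1) * (((a:ℝ)-(j:ℝ)) * ((a:ℝ)+(j:ℝ)+2) * (b:ℝ)^2)
          = (((n.choose (a-(j+1))):ℝ) * (b:ℝ)^(2*(j+1)+1)) * (((a:ℝ)+(j:ℝ)+2) * ((b:ℝ)+(j:ℝ)+1)) := by
        rw [show 2*(j+1)+1 = (2*j+1)+2 by omega, pow_add]
        linear_combination ((b:ℝ)^(2*j+1) * (b:ℝ)^2 * ((a:ℝ)+(j:ℝ)+2)) * hid2
      rw [e1, e2] at hmul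
      have hposf : (0:ℝ) < ((a:ℝ)+(j:ℝ)+2) * ((b:ℝ)+(j:ℝ)+1) := by positivity
      exact le_of_mul_le_mul_right hmul hposf

lemma pmf_pair (a b : ℕ) (hb : 1 ≤ b) (hba : b ≤ a) (j : ℕ) (hj : j + 1 ≤ b) :
    binomialPMF (a+b) ((a:ℝ)/(a+b)) (a+1+j) ≤ binomialPMF (a+b) ((a:ℝ)/(a+b)) (a-j) := by
  set n := a + b with hn
  have hN : (0:ℝ) < (n:ℝ) := by
    have : 0 < n := by omega
    exact_mod_cast this
  have hp1 : 1 - (a:ℝ)/(n:ℝ) = (b:ℝ)/(n:ℝ) := by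
    rw [one_sub_div (ne_of_gt hN)]
    congr 1
    push_cast [hn]
    ring
  have hcastn : ((a:ℝ)+(b:ℝ)) = ((n:ℕ):ℝ) := by rw [hn]; push_cast; ring
  rw [hcastn]
  unfold binomialPMF
  rw [hp1]
  have hsub1 : n - (a+1+j) = b - 1 - j := by omega
  have hsub2 : n - (a-j) = b + j := by omega
  rw [hsub1, hsub2, div_pow, div_pow, div_pow, div_pow]
  have hnn1 : ((n:ℝ))^(a+1+j) * ((n:ℝ))^(b-1-j) = ((n:ℝ))^n := by
    rw [← pow_add]; congr 1; omega
  have hnn2 : ((n:ℝ))^(a-j) * ((n:ℝ))^(b+j) = ((n:ℝ))^n := by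
    rw [← pow_add]; congr 1; omega
  have L1 : ((n.choose (a+1+j)):ℝ) * ((a:ℝ)^(a+1+j)/(n:ℝ)^(a+1+j)) * ((b:ℝ)^(b-1-j)/(n:ℝ)^(b-1-j))
      = ((n.choose (a+1+j)):ℝ) * (a:ℝ)^(a+1+j) * (b:ℝ)^(b-1-j) / (n:ℝ)^n := by
    rw [← hnn1]; ring
  have L2 : ((n.choose (a-j)):ℝ) * ((a:ℝ)^(a-j)/(n:ℝ)^(a-j)) * ((b:ℝ)^(b+j)/(n:ℝ)^(b+j))
      = ((n.choose (a-j)):ℝ) * (a:ℝ)^(a-j) * (b:ℝ)^(b+j) / (n:ℝ)^n := by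
    rw [← hnn2]; ring
  rw [L1, L2, div_le_div_iff_of_pos_right (by positivity)]
  have ea : (a:ℝ)^(a+1+j) = (a:ℝ)^(a-j) * (a:ℝ)^(2*j+1) := by
    rw [← pow_add]; congr 1; omega
  have eb : (b:ℝ)^(b+j) = (b:ℝ)^(b-1-j) * (b:ℝ)^(2*j+1) := by
    rw [← pow_add]; congr 1; omega
  rw [ea, eb]
  have hcore := pairing_core a b hb hba j hj
  calc ((n.choose (a+1+j)):ℝ) * ((a:ℝ)^(a-j) * (a:ℝ)^(2*j+1)) * (b:ℝ)^(b-1-j)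
      = (((n.choose (a+1+j)):ℝ) * (a:ℝ)^(2*j+1)) * ((a:ℝ)^(a-j) * (b:ℝ)^(b-1-j)) := by ring
    _ ≤ (((n.choose (a-j)):ℝ) * (b:ℝ)^(2*j+1)) * ((a:ℝ)^(a-j) * (b:ℝ)^(b-1-j)) := by
        apply mul_le_mul_of_nonneg_right hcore (by positivity)
    _ = ((n.choose (a-j)):ℝ) * (a:ℝ)^(a-j) * ((b:ℝ)^(b-1-j) * (b:ℝ)^(2*j+1)) := by ring

lemma part1_large (a b : ℕ) (hb : 1 ≤ b) (hba : b ≤ a) :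
    tailN (a+b) ((a:ℝ)/((a+b : ℕ):ℝ)) (a+1) ≤ 1/2 := by
  set n := a + b with hn
  set p : ℝ := (a:ℝ)/((n:ℕ):ℝ) with hp
  have hN : (0:ℝ) < (n:ℝ) := by
    have : 0 < n := by omega
    exact_mod_cast this
  have hp0 : 0 ≤ p := by positivity
  have hp1 : p ≤ 1 := by
    rw [hp, div_le_one hN]
    have : a ≤ n := by omega
    exact_mod_cast this
  have him : Finset.Icc (a+1) n = (Finset.range b).image (fun j => a+1+j) := by
    ext k
    simp only [Finset.mem_Icc, Finset.mem_image, Finset.mem_range]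
    constructor
    · intro h; exact ⟨k - (a+1), by omega, by omega⟩
    · rintro ⟨j, hj, rfl⟩; omega
  have hinj1 : ∀ x ∈ Finset.range b, ∀ y ∈ Finset.range b,
      a+1+x = a+1+y → x = y := fun x _ y _ h => by omega
  have hup : tailN n p (a+1) = ∑ j ∈ Finset.range b, binomialPMF n p (a+1+j) := by
    unfold tailN
    rw [him, Finset.sum_image hinj1]
  have hcomp : ∑ j ∈ Finset.range b, binomialPMF n p (a+1+j)
      ≤ ∑ j ∈ Finset.range b, binomialPMF n p (a-j) := by
    apply Finset.sum_le_sum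
    intro j hj
    simp only [Finset.mem_range] at hj
    have hpp : p = (a:ℝ)/((a:ℝ)+(b:ℝ)) := by rw [hp, hn]; push_cast; ring
    rw [hn, hpp]
    exact pmf_pair a b hb hba j (by omega)
  have hinj2 : ∀ x ∈ Finset.range b, ∀ y ∈ Finset.range b,
      a - x = a - y → x = y := by
    intro x hx y hy h
    simp only [Finset.mem_range] at hx hy
    omega
  have hlow : ∑ j ∈ Finset.range b, binomialPMF n p (a-j)
      ≤ ∑ k ∈ Finset.range (a+1), binomialPMF n p k := by
    rw [← Finset.sum_image hinj2]
    apply Finset.sum_le_sum_of_subset_of_nonneg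
    · intro k hk
      simp only [Finset.mem_image, Finset.mem_range] at hk ⊢
      obtain ⟨j, _, rfl⟩ := hk
      omega
    · intro k _ _; exact pmf_nonneg n k hp0 hp1
  have hsplit : ∑ k ∈ Finset.range (a+1), binomialPMF n p k + tailN n p (a+1) = 1 := by
    rw [← sum_pmf n p]
    unfold tailN
    rw [← Finset.Ico_add_one_right_eq_Icc]; simp only [Finset.range_eq_Ico]
    exact Finset.sum_Ico_consecutive _ (by omega) (by omega)
  have := hup ▸ (le_trans hcomp hlow)
  linarith

set_option maxHeartbeats 1000000 in
lemma pointwise_core (A B N p x : ℝ) (a c : ℕ)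
    (hA1 : 1 ≤ A) (hAB : A ≤ B) (hN : N = A + B) (hpN : p * N = A)
    (hAa : (a:ℝ) = A) (hc : (c:ℝ) = B - 1)
    (hx0 : 0 ≤ x) (hxp : x < p) :
    (p - x)^a * (1-(p-x))^c ≤ (p + x)^a * (1-(p+x))^c := by
  have hB1 : (1:ℝ) ≤ B := le_trans hA1 hAB
  have hN0 : (0:ℝ) < N := by rw [hN]; linarith
  have hqN : (1 - p) * N = B := by
    have : N - p * N = N - A := by rw [hpN]
    rw [hN] at this ⊢
    linarith
  have hp0 : (0:ℝ) < p := by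
    rcases le_or_gt p 0 with h | h
    · nlinarith
    · exact h
  have h2p : 2 * p ≤ 1 := by nlinarith
  rcases eq_or_lt_of_le hx0 with rfl | hx0'
  · norm_num
  have hpx1 : ∀ y : ℝ, 0 ≤ y → y ≤ x → 0 < p + y := fun y hy _ => by linarith
  have hpx2 : ∀ y : ℝ, 0 ≤ y → y ≤ x → 0 < p - y := fun y _ hy => by linarith
  have hpx3 : ∀ y : ℝ, 0 ≤ y → y ≤ x → 0 < 1 - p - y := fun y _ hy => by linarith
  have hpx4 : ∀ y : ℝ, 0 ≤ y → y ≤ x → 0 < 1 - p + y := fun y hy _ => by linarith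
  set ψ : ℝ → ℝ := fun y => A * Real.log (p+y) + (B-1) * Real.log (1-p-y)
      - A * Real.log (p-y) - (B-1) * Real.log (1-p+y) with hψ
  set D : ℝ → ℝ := fun y => (A * (p+y)⁻¹ + (B-1) * -(1-p-y)⁻¹)
      - A * -(p-y)⁻¹ - (B-1) * (1-p+y)⁻¹ with hD
  have hderiv : ∀ y ∈ Set.Icc (0:ℝ) x, HasDerivAt ψ (D y) y := by
    rintro y ⟨hy0, hyx⟩
    have h1 := hpx1 y hy0 hyx
    have h2 := hpx2 y hy0 hyx
    have h3 := hpx3 y hy0 hyx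
    have h4 := hpx4 y hy0 hyx
    have l1 : HasDerivAt (fun y : ℝ => Real.log (p+y)) ((p+y)⁻¹) y := by
      simpa [Function.comp_def] using (Real.hasDerivAt_log (ne_of_gt h1)).comp y ((hasDerivAt_id y).const_add p)
    have l2 : HasDerivAt (fun y : ℝ => Real.log (1-p-y)) (-(1-p-y)⁻¹) y := by
      simpa [Function.comp_def] using (Real.hasDerivAt_log (ne_of_gt h3)).comp y ((hasDerivAt_id y).const_sub (1-p))
    have l3 : HasDerivAt (fun y : ℝ => Real.log (p-y)) (-(p-y)⁻¹) y := by
      simpa [Function.comp_def] using (Real.hasDerivAt_log (ne_of_gt h2)).comp y ((hasDerivAt_id y).const_sub p)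
    have l4 : HasDerivAt (fun y : ℝ => Real.log (1-p+y)) ((1-p+y)⁻¹) y := by
      simpa [Function.comp_def] using (Real.hasDerivAt_log (ne_of_gt h4)).comp y ((hasDerivAt_id y).const_add (1-p))
    exact (((l1.const_mul A).add (l2.const_mul (B-1))).sub (l3.const_mul A)).sub
      (l4.const_mul (B-1))
  have hDnn : ∀ y ∈ Set.Ioo (0:ℝ) x, 0 ≤ D y := by
    rintro y ⟨hy0, hyx⟩
    have h1 := hpx1 y (le_of_lt hy0) (le_of_lt hyx)
    have h2 := hpx2 y (le_of_lt hy0) (le_of_lt hyx)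
    have h3 := hpx3 y (le_of_lt hy0) (le_of_lt hyx)
    have h4 := hpx4 y (le_of_lt hy0) (le_of_lt hyx)
    have hNyA : N * y < A := by nlinarith
    have hNy0 : 0 ≤ N * y := by positivity
    have ha1 : A * (p+y)⁻¹ + A * (p-y)⁻¹ = 2*A*p/((p+y)*(p-y)) := by
      field_simp
      ring
    have ha2 : (B-1) * (1-p-y)⁻¹ + (B-1) * (1-p+y)⁻¹
        = 2*(B-1)*(1-p)/((1-p-y)*(1-p+y)) := by
      field_simp
      ring
    have hDy : D y = 2*A*p/((p+y)*(p-y)) - 2*(B-1)*(1-p)/((1-p-y)*(1-p+y)) := by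
      rw [hD, ← ha1, ← ha2]; ring
    rw [hDy, sub_nonneg, div_le_div_iff₀ (by positivity) (by positivity)]
    have key : (2*A*p*((1-p-y)*(1-p+y)) - 2*(B-1)*(1-p)*((p+y)*(p-y))) * N^3
        = 2*((N*y)^2*(B^2-A^2) + B*(A^2-(N*y)^2)) := by
      rw [← hpN, ← hqN]
      ring
    have k1 : (0:ℝ) ≤ (N*y)^2*(B^2-A^2) := by
      apply mul_nonneg (sq_nonneg _)
      nlinarith
    have k2 : (0:ℝ) ≤ B*(A^2-(N*y)^2) := by
      apply mul_nonneg (by linarith)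
      nlinarith
    have hP : 0 ≤ 2*A*p*((1-p-y)*(1-p+y)) - 2*(B-1)*(1-p)*((p+y)*(p-y)) :=
      (mul_nonneg_iff_of_pos_right (pow_pos hN0 3)).1 (by rw [key]; linarith)
    linarith
  have hmono : MonotoneOn ψ (Set.Icc 0 x) := by
    apply monotoneOn_of_hasDerivWithinAt_nonneg (convex_Icc _ _)
      (fun y hy => (hderiv y hy).continuousAt.continuousWithinAt) (f' := D)
    · intro y hy
      rw [interior_Icc] at hy
      exact (hderiv y (Set.mem_Icc_of_Ioo hy)).hasDerivWithinAt
    · intro y hy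
      rw [interior_Icc] at hy
      exact hDnn y hy
  have hψ0 : ψ 0 = 0 := by rw [hψ]; norm_num
  have hψx : 0 ≤ ψ x := by
    rw [← hψ0]
    exact hmono (Set.left_mem_Icc.2 hx0) (Set.right_mem_Icc.2 hx0) hx0
  have e1 : 1 - (p - x) = 1 - p + x := by ring
  have e2 : 1 - (p + x) = 1 - p - x := by ring
  rw [e1, e2]
  have h1 := hpx1 x hx0 (le_refl x)
  have h2 := hpx2 x hx0 (le_refl x)
  have h3 := hpx3 x hx0 (le_refl x)
  have h4 := hpx4 x hx0 (le_refl x)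
  have hL : (0:ℝ) < (p - x)^a * (1-p+x)^c := by positivity
  have hR : (0:ℝ) < (p + x)^a * (1-p-x)^c := by positivity
  rw [← Real.log_le_log_iff hL hR, Real.log_mul (by positivity) (by positivity),
    Real.log_mul (by positivity) (by positivity), Real.log_pow, Real.log_pow,
    Real.log_pow, Real.log_pow]
  have hψxval : ψ x = A * Real.log (p+x) + (B-1) * Real.log (1-p-x)
      - A * Real.log (p-x) - (B-1) * Real.log (1-p+x) := by rw [hψ]
  rw [hψxval] at hψx
  rw [hAa, hc]
  linarith

lemma part1_small (a b : ℕ) (ha : 1 ≤ a) (hab : a ≤ b) :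
    tailN (a+b) ((a:ℝ)/((a+b : ℕ):ℝ)) (a+1) ≤ 1/2 := by
  set n := a + b with hn
  have hN0 : (0:ℝ) < ((n:ℕ):ℝ) := by
    have : 0 < n := by omega
    exact_mod_cast this
  set p : ℝ := (a:ℝ)/((n:ℕ):ℝ) with hp
  have hA1 : (1:ℝ) ≤ (a:ℝ) := by exact_mod_cast ha
  have hAB : (a:ℝ) ≤ (b:ℝ) := by exact_mod_cast hab
  have hNcast : ((n:ℕ):ℝ) = (a:ℝ) + (b:ℝ) := by rw [hn]; push_cast; ring
  have hpN : p * ((n:ℕ):ℝ) = (a:ℝ) := by rw [hp]; field_simp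
  have hp0 : 0 < p := by rw [hp]; positivity
  have h2p : 2 * p ≤ 1 := by
    rw [hp, ← mul_div_assoc, div_le_one hN0, hNcast]
    linarith
  -- pointwise comparison for uAux
  have hsub : n - (a+1) = b - 1 := by omega
  have hux : ∀ x ∈ Set.Ioo (0:ℝ) p,
      uAux n (p-x) (a+1) ≤ uAux n (p+x) (a+1) := by
    rintro x ⟨hx0, hxp⟩
    unfold uAux
    rw [hsub]
    have hcore := pointwise_core (a:ℝ) (b:ℝ) ((n:ℕ):ℝ) p x a (b-1)
      hA1 hAB hNcast hpN rfl (by rw [Nat.cast_sub (by omega)]; norm_num)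
      (le_of_lt hx0) hxp
    have e : (a+1) - 1 = a := by omega
    rw [e]
    calc ((a+1:ℕ):ℝ) * (n.choose (a+1) : ℝ) * (p-x)^a * (1-(p-x))^(b-1)
        = (((a+1:ℕ):ℝ) * (n.choose (a+1) : ℝ)) * ((p-x)^a * (1-(p-x))^(b-1)) := by ring
      _ ≤ (((a+1:ℕ):ℝ) * (n.choose (a+1) : ℝ)) * ((p+x)^a * (1-(p+x))^(b-1)) := by
          apply mul_le_mul_of_nonneg_left hcore (by positivity)
      _ = ((a+1:ℕ):ℝ) * (n.choose (a+1) : ℝ) * (p+x)^a * (1-(p+x))^(b-1) := by ring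
  -- the symmetrization function
  set H : ℝ → ℝ := fun x => tailN n (p+x) (a+1) + tailN n (p-x) (a+1) with hH
  have hHd : ∀ x : ℝ, HasDerivAt H (uAux n (p+x) (a+1) - uAux n (p-x) (a+1)) x := by
    intro x
    have h1 : HasDerivAt (fun x : ℝ => tailN n (p+x) (a+1)) (uAux n (p+x) (a+1)) x := by
      have := (hasDerivAt_tailN n (a+1) (p+x)).comp x ((hasDerivAt_id x).const_add p)
      simpa [Function.comp_def] using this
    have h2 : HasDerivAt (fun x : ℝ => tailN n (p-x) (a+1)) (-uAux n (p-x) (a+1)) x := by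
      have := (hasDerivAt_tailN n (a+1) (p-x)).comp x ((hasDerivAt_id x).const_sub p)
      simpa [Function.comp_def] using this
    have := h1.fun_add h2
    rw [hH]
    refine this.congr_deriv ?_; ring
  have hmono : MonotoneOn H (Set.Icc 0 p) := by
    apply monotoneOn_of_hasDerivWithinAt_nonneg (convex_Icc _ _)
      (fun y hy => (hHd y).continuousAt.continuousWithinAt)
      (f' := fun x => uAux n (p+x) (a+1) - uAux n (p-x) (a+1))
    · intro y hy
      exact (hHd y).hasDerivWithinAt
    · intro y hy
      rw [interior_Icc] at hy
      have := hux y hy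
      linarith
  have hends := hmono (Set.left_mem_Icc.2 (le_of_lt hp0))
    (Set.right_mem_Icc.2 (le_of_lt hp0)) (le_of_lt hp0)
  have hH0 : H 0 = 2 * tailN n p (a+1) := by
    rw [hH]; norm_num; ring
  have hHp : H p ≤ 1 := by
    show tailN n (p+p) (a+1) + tailN n (p-p) (a+1) ≤ 1
    have e1 : p - p = 0 := by ring
    rw [e1, tailN_zero n (a+1) (by omega)]
    have : tailN n (p+p) (a+1) ≤ 1 := by
      apply tailN_le_one n (a+1) (by positivity)
      linarith
    linarith
  rw [hH0] at hends
  linarith [hends, hHp]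

/-- For integers `l ≥ 1` and `1 ≤ μ ≤ n - l`, with `X_{n,μ} ~ Binom(n, μ/n)`:
`1/2 ≥ P(X_{n,μ} ≥ μ+l) ≥ (μ/(μ+l))^{μ+l} ≥ 1/(1+l)^{1+l}`, and the two lower bounds
equal `P(X_{μ+l,μ} = μ+l)` and `P(X_{1+l,1} = 1+l)` respectively. -/
theorem stmt0 (l μ n : ℕ) (hl : 1 ≤ l) (hμ : 1 ≤ μ) (hμn : μ + l ≤ n) :
    (1 : ℝ) / 2 ≥ binomialTail n ((μ : ℝ) / n) ((μ : ℝ) + l) ∧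
    binomialTail n ((μ : ℝ) / n) ((μ : ℝ) + l) ≥ ((μ : ℝ) / ((μ : ℝ) + l)) ^ (μ + l) ∧
    ((μ : ℝ) / ((μ : ℝ) + l)) ^ (μ + l) ≥ 1 / ((1 : ℝ) + l) ^ (1 + l) ∧
    ((μ : ℝ) / ((μ : ℝ) + l)) ^ (μ + l)
      = binomialPMF (μ + l) ((μ : ℝ) / ((μ : ℝ) + l)) (μ + l) ∧
    1 / ((1 : ℝ) + l) ^ (1 + l)
      = binomialPMF (1 + l) ((1 : ℝ) / ((1 : ℝ) + l)) (1 + l) := by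
  have hn0 : 0 < n := by omega
  have hn0' : (0:ℝ) < (n:ℝ) := by exact_mod_cast hn0
  have hp0 : (0:ℝ) ≤ (μ:ℝ)/n := by positivity
  have hp1 : (μ:ℝ)/n ≤ 1 := by
    rw [div_le_one hn0']
    have : μ ≤ n := by omega
    exact_mod_cast this
  have hcast : (μ:ℝ) + l = ((μ+l : ℕ):ℝ) := by push_cast; ring
  have htail : binomialTail n ((μ:ℝ)/n) ((μ:ℝ)+l) = tailN n ((μ:ℝ)/n) (μ+l) := by
    rw [hcast]
    exact binomialTail_eq n _ (μ+l) (by omega)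
  refine ⟨?_, ?_, ?_, ?_, ?_⟩
  · rw [ge_iff_le, htail]
    have h1 : tailN n ((μ:ℝ)/n) (μ+l) ≤ tailN n ((μ:ℝ)/n) (μ+1) :=
      tailN_mono_s n (by omega) hp0 hp1
    refine le_trans h1 ?_
    obtain ⟨b, rfl⟩ : ∃ b, n = μ + b := ⟨n - μ, by omega⟩
    have hb1 : 1 ≤ b := by omega
    rcases le_total b μ with h | h
    · exact part1_large μ b hb1 h
    · exact part1_small μ b hμ h
  · rw [ge_iff_le, htail]
    exact part2 μ l n hμ hl hμn
  · rw [ge_iff_le]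
    exact part3 l μ hl hμ
  · rw [pmf_self]
  · rw [pmf_self, div_pow, one_pow]
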